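/- Let p ∈ [0,1], δ > 0, and let f : ℝ^n → ℝ be differentiable and (L,p)-Hölder smooth. Let L_δ be any constant with L_δ ≥ ((1−p)/((1+p)δ))^{(1−p)/(1+p)} · L^{2/(1+p)}, with the convention that the first factor equals 1 when p = 1. Then for all x, y ∈ ℝ^n, f(y) ≤ f(x) + ⟨∇f(x), y − x⟩ + (L_δ/2)‖y − x‖² + δ/2. -/

import Mathlib

open scoped RealInnerProductSpace

/-- Descent lemma for Hölder-smooth functions. -/
lemma holder_descent {n : ℕ} (L p : ℝ) (hp0 : 0 ≤ p)
    (f : EuclideanSpace ℝ (Fin n) → ℝ)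
    (f' : EuclideanSpace ℝ (Fin n) → EuclideanSpace ℝ (Fin n))
    (hdiff : ∀ x, HasGradientAt f (f' x) x)
    (hHolder : ∀ x y, ‖f' x - f' y‖ ≤ L * ‖x - y‖ ^ p) :
    ∀ x y, f y ≤ f x + ⟪f' x, y - x⟫ + L / (1 + p) * ‖y - x‖ ^ (1 + p) := by
  intro x y
  have h1p : (0:ℝ) < 1 + p := by linarith
  by_cases hxy : y = x
  · subst hxy
    simp [Real.zero_rpow h1p.ne']
  set v := y - x with hv
  have hvne : ‖v‖ ≠ 0 := by
    simp only [hv, ne_eq, norm_eq_zero, sub_eq_zero]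
    exact hxy
  set C := L * ‖v‖ ^ (1 + p) with hC
  set g : ℝ → ℝ := fun t => f (x + t • v) - t * ⟪f' x, v⟫ - C * t ^ (1 + p) / (1 + p)
    with hgdef
  have hline : ∀ t : ℝ, HasDerivAt (fun s : ℝ => x + s • v) v t := by
    intro t
    simpa using ((hasDerivAt_id t).smul_const v).const_add x
  have hg : ∀ t : ℝ,
      HasDerivAt g (⟪f' (x + t • v), v⟫ - ⟪f' x, v⟫ - C * t ^ p) t := by
    intro t
    have h2 : HasDerivAt (fun s : ℝ => f (x + s • v)) ⟪f' (x + t • v), v⟫ t := by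
      have := (hdiff (x + t • v)).hasFDerivAt.comp_hasDerivAt t (hline t)
      simp at this
      exact this
    have h3 : HasDerivAt (fun s : ℝ => s * ⟪f' x, v⟫) ⟪f' x, v⟫ t :=
      hasDerivAt_mul_const _
    have h4 : HasDerivAt (fun s : ℝ => C * s ^ (1 + p) / (1 + p))
        (C * ((1 + p) * t ^ ((1 + p) - 1)) / (1 + p)) t :=
      ((Real.hasDerivAt_rpow_const (Or.inr (by linarith))).const_mul C).div_const _
    have e : C * ((1 + p) * t ^ ((1 + p) - 1)) / (1 + p) = C * t ^ p := by
      rw [show (1:ℝ) + p - 1 = p by ring]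
      field_simp
    rw [e] at h4
    exact (h2.sub h3).sub h4
  have hanti : AntitoneOn g (Set.Icc 0 1) := by
    apply antitoneOn_of_deriv_nonpos (convex_Icc 0 1)
    · exact fun t _ => (hg t).continuousAt.continuousWithinAt
    · exact fun t _ => ((hg t).differentiableAt).differentiableWithinAt
    · intro t ht
      rw [interior_Icc] at ht
      rw [(hg t).deriv]
      have htpos : 0 < t := ht.1
      have hkey : ⟪f' (x + t • v), v⟫ - ⟪f' x, v⟫ ≤ C * t ^ p := by
        have h5 : ⟪f' (x + t • v), v⟫ - ⟪f' x, v⟫ = ⟪f' (x + t • v) - f' x, v⟫ :=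
          (inner_sub_left _ _ _).symm
        have h6 : ⟪f' (x + t • v) - f' x, v⟫ ≤ ‖f' (x + t • v) - f' x‖ * ‖v‖ :=
          real_inner_le_norm _ _
        have h7 := hHolder (x + t • v) x
        have h8 : x + t • v - x = t • v := add_sub_cancel_left x _
        rw [h8] at h7
        have h9 : ‖t • v‖ ^ p = t ^ p * ‖v‖ ^ p := by
          rw [norm_smul, Real.norm_eq_abs, abs_of_pos htpos,
            Real.mul_rpow htpos.le (norm_nonneg v)]
        have h10 : ‖v‖ ^ (1 + p) = ‖v‖ ^ p * ‖v‖ := by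
          rw [add_comm, Real.rpow_add_one hvne]
        calc ⟪f' (x + t • v), v⟫ - ⟪f' x, v⟫
            ≤ ‖f' (x + t • v) - f' x‖ * ‖v‖ := by rw [h5]; exact h6
          _ ≤ L * ‖t • v‖ ^ p * ‖v‖ :=
              mul_le_mul_of_nonneg_right h7 (norm_nonneg v)
          _ = C * t ^ p := by rw [h9, hC, h10]; ring
      linarith
  have h01 : g 1 ≤ g 0 := hanti (Set.left_mem_Icc.mpr zero_le_one)
    (Set.right_mem_Icc.mpr zero_le_one) zero_le_one
  have hg0 : g 0 = f x := by
    simp [hgdef, Real.zero_rpow h1p.ne']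
  have hg1 : g 1 = f y - ⟪f' x, v⟫ - C / (1 + p) := by
    simp only [hgdef, one_smul, Real.one_rpow, one_mul, mul_one]
    rw [show x + v = y by rw [hv]; abel]
  rw [hg0, hg1] at h01
  have : C / (1 + p) = L / (1 + p) * ‖v‖ ^ (1 + p) := by rw [hC]; ring
  linarith [this ▸ h01]

/-- The scalar Young-type inequality. -/
lemma scalar_young (L p δ Lδ : ℝ) (hL : 0 ≤ L) (hp0 : 0 ≤ p) (hp1 : p ≤ 1) (hδ : 0 < δ)
    (hLδ : ((1 - p) / ((1 + p) * δ)) ^ ((1 - p) / (1 + p)) * L ^ (2 / (1 + p)) ≤ Lδ)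
    (t : ℝ) (ht : 0 ≤ t) :
    L / (1 + p) * t ^ (1 + p) ≤ Lδ / 2 * t ^ 2 + δ / 2 := by
  have h1p : (0:ℝ) < 1 + p := by linarith
  have hLδ0 : 0 ≤ Lδ := le_trans (mul_nonneg
    (Real.rpow_nonneg (div_nonneg (by linarith) (by positivity)) _)
    (Real.rpow_nonneg hL _)) hLδ
  by_cases hp : p = 1
  · subst hp
    norm_num at hLδ ⊢
    nlinarith [sq_nonneg t, hδ.le]
  · have hp' : p < 1 := lt_of_le_of_ne hp1 hp
    have hb : (0:ℝ) < 1 - p := by linarith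
    by_cases hL0 : L = 0
    · subst hL0
      simp only [zero_div, zero_mul]
      nlinarith [sq_nonneg t, mul_nonneg hLδ0 (sq_nonneg t), hδ.le]
    have hLpos : 0 < L := lt_of_le_of_ne hL (Ne.symm hL0)
    set a := 1 + p with ha'
    set b := 1 - p with hb'
    set q1 := b / a with hq1
    set q2 := 2 / a with hq2
    set θ := a / 2 with hθ'
    set A := L / a with hA'
    set d := δ / b with hd'
    have hA : 0 < A := by positivity
    have hd : 0 < d := by positivity
    set c := A ^ q2 * d ^ (-q1) with hc'
    have hcpos : 0 < c := by positivity
    -- key1 : c ^ θ * d ^ (1 - θ) = A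
    have key1 : c ^ θ * d ^ (1 - θ) = A := by
      rw [hc', Real.mul_rpow (by positivity) (by positivity),
        ← Real.rpow_mul hA.le, ← Real.rpow_mul hd.le,
        show q2 * θ = 1 by rw [hq2, hθ']; field_simp,
        show -q1 * θ = θ - 1 by rw [hq1, hθ', hb', ha']; field_simp; ring,
        Real.rpow_one, mul_assoc, ← Real.rpow_add hd,
        show θ - 1 + (1 - θ) = (0:ℝ) by ring, Real.rpow_zero, mul_one]
    -- key2 : θ * c = half of the minimal Lδ
    have key2 : θ * c ≤ Lδ / 2 := by
      have h1 : A ^ q2 = L ^ q2 * (a ^ q2)⁻¹ := by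
        rw [hA', Real.div_rpow hL h1p.le, div_eq_mul_inv]
      have h2 : d ^ (-q1) = (δ ^ q1)⁻¹ * b ^ q1 := by
        rw [hd', Real.rpow_neg (by positivity), Real.div_rpow hδ.le hb.le, inv_div,
          div_eq_mul_inv, mul_comm]
      have h3 : (b / (a * δ)) ^ q1 = b ^ q1 * (a ^ q1 * δ ^ q1)⁻¹ := by
        rw [Real.div_rpow hb.le (by positivity), Real.mul_rpow h1p.le hδ.le, div_eq_mul_inv]
      have h4 : a * (a ^ q2)⁻¹ = (a ^ q1)⁻¹ := by
        have e : (1:ℝ) - q2 = -q1 := by rw [hq1, hq2, hb', ha']; field_simp; ring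
        calc a * (a ^ q2)⁻¹ = a ^ (1:ℝ) / a ^ q2 := by rw [Real.rpow_one, div_eq_mul_inv]
          _ = a ^ ((1:ℝ) - q2) := (Real.rpow_sub h1p _ _).symm
          _ = a ^ (-q1) := by rw [e]
          _ = (a ^ q1)⁻¹ := Real.rpow_neg h1p.le _
      have heq : θ * c = 1 / 2 * ((b / (a * δ)) ^ q1 * L ^ q2) := by
        rw [hc', h1, h2, h3, hθ', mul_inv]
        have haq2 : (0:ℝ) < a ^ q2 := Real.rpow_pos_of_pos h1p _
        linear_combination (L ^ q2 * (δ ^ q1)⁻¹ * b ^ q1 / 2) * h4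
      rw [heq]
      have : (b / (a * δ)) ^ q1 * L ^ q2 ≤ Lδ := by
        rw [hq1, hq2, hb', ha'] at *
        exact hLδ
      linarith
    -- Young's inequality
    have hθ0 : 0 ≤ θ := by positivity
    have hθ1 : θ + (1 - θ) = 1 := by ring
    have young := Real.geom_mean_le_arith_mean2_weighted hθ0
      (by rw [hθ', ha']; linarith) (by positivity : (0:ℝ) ≤ c * t ^ 2) hd.le hθ1
    have hct : (c * t ^ 2) ^ θ = c ^ θ * t ^ (1 + p) := by
      rw [Real.mul_rpow hcpos.le (by positivity),
        show (t:ℝ) ^ 2 = t ^ ((2:ℕ):ℝ) from (Real.rpow_natCast t 2).symm,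
        ← Real.rpow_mul ht,
        show ((2:ℕ):ℝ) * θ = 1 + p by push_cast; rw [hθ', ha']; ring]
    calc L / (1 + p) * t ^ (1 + p) = c ^ θ * d ^ (1 - θ) * t ^ (1 + p) := by
          rw [key1, hA', ha']
      _ = (c * t ^ 2) ^ θ * d ^ (1 - θ) := by rw [hct]; ring
      _ ≤ θ * (c * t ^ 2) + (1 - θ) * d := young
      _ = θ * c * t ^ 2 + δ / 2 := by
          rw [hd', hθ', hb', ha']; field_simp; ring
      _ ≤ Lδ / 2 * t ^ 2 + δ / 2 := by nlinarith [sq_nonneg t]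

/-- Nesterov's approximate-smoothness lemma: if `f : ℝ^n → ℝ` is `(L,p)`-Hölder smooth and
`L_δ ≥ ((1−p)/((1+p)δ))^{(1−p)/(1+p)} · L^{2/(1+p)}` (the first factor being `1` when `p = 1`,
as `Real.rpow` gives `0^0 = 1`), then
`f(y) ≤ f(x) + ⟨∇f(x), y − x⟩ + (L_δ/2)‖y − x‖² + δ/2` for all `x, y`. -/
theorem stmt2 {n : ℕ} (L p δ Lδ : ℝ) (hL : 0 ≤ L) (hp0 : 0 ≤ p) (hp1 : p ≤ 1) (hδ : 0 < δ)
    (hLδ : ((1 - p) / ((1 + p) * δ)) ^ ((1 - p) / (1 + p)) * L ^ (2 / (1 + p)) ≤ Lδ)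
    (f : EuclideanSpace ℝ (Fin n) → ℝ)
    (f' : EuclideanSpace ℝ (Fin n) → EuclideanSpace ℝ (Fin n))
    (hdiff : ∀ x, HasGradientAt f (f' x) x)
    (hHolder : ∀ x y, ‖f' x - f' y‖ ≤ L * ‖x - y‖ ^ p) :
    ∀ x y, f y ≤ f x + ⟪f' x, y - x⟫ + Lδ / 2 * ‖y - x‖ ^ 2 + δ / 2 := by
  intro x y
  have h1 := holder_descent L p hp0 f f' hdiff hHolder x y
  have h2 := scalar_young L p δ Lδ hL hp0 hp1 hδ hLδ ‖y - x‖ (norm_nonneg _)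
  linarith
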